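/- If a, b, r are real numbers with a > b > r ≥ |z| for a complex number z, and λ ∈ [0,1], then Re(z/(b−z) − λ·z/(a−z)) ≤ r/(b−r) − λ·r/(a−r). -/

import Mathlib

set_option maxHeartbeats 1000000 in
theorem stmt1 (a b r lam : ℝ) (z : ℂ) (hab : a > b) (hbr : b > r)
    (hr : 0 < r) (hz : ‖z‖ ≤ r) (hlam : lam ∈ Set.Icc (0:ℝ) 1) :
    (z / ((b:ℂ) - z) - (lam:ℂ) * (z / ((a:ℂ) - z))).re ≤
      r / (b - r) - lam * (r / (a - r)) := by
  obtain ⟨hl0, hl1⟩ := hlam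
  set x := z.re with hxdef
  set y := z.im with hydef
  have hxr : x ≤ r := le_trans (le_trans (le_abs_self _) (Complex.abs_re_le_norm z)) hz
  have hs : x ^ 2 + y ^ 2 ≤ r ^ 2 := by
    have h1 : ‖z‖ ^ 2 ≤ r ^ 2 := by
      have := norm_nonneg z
      nlinarith
    rwa [Complex.sq_norm, Complex.normSq_apply, ← hxdef, ← hydef, ← pow_two, ← pow_two] at h1
  have hu : (0:ℝ) ≤ r - x := by linarith
  have hp : (0:ℝ) < a - r := by linarith
  have hq : (0:ℝ) < b - r := by linarith
  have hax : (0:ℝ) < a - x := by linarith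
  have hbx : (0:ℝ) < b - x := by linarith
  have ha0 : (0:ℝ) < a := by linarith
  have hb0 : (0:ℝ) < b := by linarith
  have hQa : (0:ℝ) < (a - x) ^ 2 + y ^ 2 := by nlinarith [sq_nonneg y]
  have hQb : (0:ℝ) < (b - x) ^ 2 + y ^ 2 := by nlinarith [sq_nonneg y]
  -- the key nonnegative quantity C
  have hC : (0:ℝ) ≤ r * (x ^ 2 + y ^ 2) + a * b * (a + b - x - 2 * r)
      + r * (r - x) * (a + b - x) := by
    nlinarith [mul_nonneg hr.le (sq_nonneg y), mul_nonneg hr.le (mul_pos hp hp).le,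
      mul_nonneg hr.le (mul_pos hp hq).le, mul_nonneg hr.le (mul_pos hq hq).le,
      mul_nonneg (mul_nonneg hr.le hp.le) hu, mul_nonneg (mul_nonneg hr.le hq.le) hu,
      mul_nonneg (mul_nonneg hr.le hu) hu,
      mul_nonneg (mul_pos hp hq).le hp.le, mul_nonneg (mul_pos hp hq).le hq.le,
      mul_nonneg (mul_pos hp hq).le hu]
  have hE : (0:ℝ) ≤ y ^ 2 * (r * (x ^ 2 + y ^ 2) + a * b * (a + b - x - 2 * r)
      + r * (r - x) * (a + b - x))
      + (r - x) * ((a - x) * ((b - x) * (a * b - r * x))) := by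
    have habrx : (0:ℝ) < a * b - r * x := by nlinarith
    have := mul_nonneg (sq_nonneg y) hC
    have := mul_nonneg hu (mul_nonneg hax.le (mul_nonneg hbx.le habrx.le))
    linarith
  -- Lemma A : f(a) ≤ r/(a-r)
  have hA : (x * (a - x) - y ^ 2) / ((a - x) ^ 2 + y ^ 2) ≤ r / (a - r) := by
    rw [div_le_div_iff₀ hQa hp]
    nlinarith [mul_nonneg (mul_nonneg ha0.le hu) hax.le, mul_nonneg ha0.le (sq_nonneg y)]
  -- Lemma B : monotonicity of the deficit
  have hB : a * ((a - x) * (r - x) + y ^ 2) / ((a - r) * ((a - x) ^ 2 + y ^ 2))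
      ≤ b * ((b - x) * (r - x) + y ^ 2) / ((b - r) * ((b - x) ^ 2 + y ^ 2)) := by
    rw [div_le_div_iff₀ (mul_pos hp hQa) (mul_pos hq hQb)]
    have hid : b * ((b - x) * (r - x) + y ^ 2) * ((a - r) * ((a - x) ^ 2 + y ^ 2))
        - a * ((a - x) * (r - x) + y ^ 2) * ((b - r) * ((b - x) ^ 2 + y ^ 2))
        = (a - b) * (y ^ 2 * (r * (x ^ 2 + y ^ 2) + a * b * (a + b - x - 2 * r)
            + r * (r - x) * (a + b - x))
          + (r - x) * ((a - x) * ((b - x) * (a * b - r * x)))) := by ring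
    have h3 := mul_nonneg (by linarith : (0:ℝ) ≤ a - b) hE
    linarith [hid, h3]
  -- deficit identities
  have e1 : r / (b - r) - (x * (b - x) - y ^ 2) / ((b - x) ^ 2 + y ^ 2)
      = b * ((b - x) * (r - x) + y ^ 2) / ((b - r) * ((b - x) ^ 2 + y ^ 2)) := by
    field_simp
    ring
  have e2 : r / (a - r) - (x * (a - x) - y ^ 2) / ((a - x) ^ 2 + y ^ 2)
      = a * ((a - x) * (r - x) + y ^ 2) / ((a - r) * ((a - x) ^ 2 + y ^ 2)) := by
    field_simp
    ring
  rw [← e1, ← e2] at hB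
  -- reduce the complex goal to the real inequality
  simp only [Complex.sub_re, Complex.re_ofReal_mul, Complex.div_re, Complex.normSq_apply,
    Complex.sub_im, Complex.ofReal_re, Complex.ofReal_im, ← hxdef, ← hydef]
  have ea : x * (a - x) / ((a - x) * (a - x) + (0 - y) * (0 - y))
      + y * (0 - y) / ((a - x) * (a - x) + (0 - y) * (0 - y))
      = (x * (a - x) - y ^ 2) / ((a - x) ^ 2 + y ^ 2) := by
    rw [← add_div]
    congr 1 <;> ring
  have eb : x * (b - x) / ((b - x) * (b - x) + (0 - y) * (0 - y))
      + y * (0 - y) / ((b - x) * (b - x) + (0 - y) * (0 - y))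
      = (x * (b - x) - y ^ 2) / ((b - x) ^ 2 + y ^ 2) := by
    rw [← add_div]
    congr 1 <;> ring
  rw [ea, eb]
  -- final combination
  set fa := (x * (a - x) - y ^ 2) / ((a - x) ^ 2 + y ^ 2)
  set fb := (x * (b - x) - y ^ 2) / ((b - x) ^ 2 + y ^ 2)
  have hta : 0 ≤ r / (a - r) - fa := by linarith
  have hmul : lam * (r / (a - r) - fa) ≤ r / (a - r) - fa :=
    mul_le_of_le_one_left hta hl1
  nlinarith [hmul, hB]
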